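/- Every strongly infinitely divisible N×N nonnegative matrix B has strictly positive diagonal entries: B_{ii} > 0 for all i. -/

import Mathlib

open Matrix

/-- A real square matrix is (entrywise) nonnegative if all of its entries are nonnegative. -/
def IsNonnegMatrix {ι : Type*} (B : Matrix ι ι ℝ) : Prop :=
  ∀ i j, 0 ≤ B i j

/-- A Z-matrix is a real square matrix all of whose off-diagonal entries are nonpositive. -/
def IsZMatrix {ι : Type*} (Q : Matrix ι ι ℝ) : Prop :=
  ∀ i j, i ≠ j → Q i j ≤ 0

/-- A nonnegative matrix `B` is infinitely divisible if for every positive integer `n`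
there exists a nonnegative matrix `K` with `K ^ n = B`. -/
def IsInfinitelyDivisible {ι : Type*} [Fintype ι] [DecidableEq ι] (B : Matrix ι ι ℝ) : Prop :=
  ∀ n : ℕ, 0 < n → ∃ K : Matrix ι ι ℝ, IsNonnegMatrix K ∧ K ^ n = B

/-- `B` is strongly infinitely divisible if it is infinitely divisible and `det B > 0`. -/
def IsStronglyInfinitelyDivisible {ι : Type*} [Fintype ι] [DecidableEq ι]
    (B : Matrix ι ι ℝ) : Prop :=
  IsInfinitelyDivisible B ∧ 0 < B.det

/-- An inverse M-matrix is an invertible nonnegative matrix whose inverse is a Z-matrix. -/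
def IsInverseMMatrix {ι : Type*} [Fintype ι] [DecidableEq ι] (K : Matrix ι ι ℝ) : Prop :=
  IsUnit K.det ∧ IsNonnegMatrix K ∧ IsZMatrix K⁻¹

/-- A stochastic matrix is a nonnegative square matrix each of whose rows sums to `1`. -/
def IsStochasticMatrix {ι : Type*} [Fintype ι] (P : Matrix ι ι ℝ) : Prop :=
  IsNonnegMatrix P ∧ ∀ i, ∑ j, P i j = 1

/-- An intensity matrix is a real square matrix whose off-diagonal entries are nonnegative
and each of whose rows sums to `0`. -/
def IsIntensityMatrix {ι : Type*} [Fintype ι] (R : Matrix ι ι ℝ) : Prop :=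
  (∀ i j, i ≠ j → 0 ≤ R i j) ∧ ∀ i, ∑ j, R i j = 0


lemma pow_nonneg_entries {N : ℕ} (K : Matrix (Fin N) (Fin N) ℝ) (hK : ∀ i j, 0 ≤ K i j) :
    ∀ (m : ℕ) (i j : Fin N), 0 ≤ (K ^ m) i j := by
  intro m
  induction m with
  | zero =>
    intro i j
    by_cases h : i = j <;> simp [Matrix.one_apply, h]
  | succ m ih =>
    intro i j
    rw [pow_succ, Matrix.mul_apply]
    exact Finset.sum_nonneg fun k _ => mul_nonneg (ih i k) (hK k j)

lemma walk_pos {N : ℕ} (K : Matrix (Fin N) (Fin N) ℝ) (hK : ∀ i j, 0 ≤ K i j)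
    (τ : Equiv.Perm (Fin N)) (hτ : ∀ j, 0 < K j (τ j)) :
    ∀ (m : ℕ) (a : Fin N), 0 < (K ^ m) a ((τ ^ m) a) := by
  intro m
  induction m with
  | zero => intro a; simp [Matrix.one_apply]
  | succ m ih =>
    intro a
    rw [pow_succ, Matrix.mul_apply]
    apply Finset.sum_pos' (fun j _ => mul_nonneg (pow_nonneg_entries K hK m a j) (hK j _))
    refine ⟨(τ ^ m) a, Finset.mem_univ _, ?_⟩
    have h1 : ((τ ^ (m + 1)) a) = τ ((τ ^ m) a) := by rw [pow_succ']; rfl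
    rw [h1]
    exact mul_pos (ih a) (hτ _)

theorem stmt11 (N : ℕ) (B : Matrix (Fin N) (Fin N) ℝ) (hBnn : IsNonnegMatrix B)
    (hBdiv : IsStronglyInfinitelyDivisible B) :
    ∀ i, 0 < B i i := by
  intro i
  obtain ⟨K, hKnn, hKB⟩ := hBdiv.1 (Nat.factorial N) (Nat.factorial_pos N)
  have hdet : K.det ≠ 0 := by
    intro h
    have hB2 := hBdiv.2
    rw [← hKB, Matrix.det_pow, h, zero_pow (Nat.factorial_ne_zero N)] at hB2
    exact lt_irrefl 0 hB2
  rw [Matrix.det_apply] at hdet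
  obtain ⟨σ, -, hσ⟩ := Finset.exists_ne_zero_of_sum_ne_zero hdet
  have hprod : ∀ j, K (σ j) j ≠ 0 := by
    have : (∏ j, K (σ j) j) ≠ 0 := by
      intro h; rw [h] at hσ; simp at hσ
    exact fun j => Finset.prod_ne_zero_iff.mp this j (Finset.mem_univ j)
  have hτ : ∀ j, 0 < K j (σ⁻¹ j) := by
    intro j
    have := hprod (σ⁻¹ j)
    rw [show σ (σ⁻¹ j) = j from σ.apply_symm_apply j] at this
    exact lt_of_le_of_ne (hKnn _ _) (Ne.symm this)
  have hone : (σ⁻¹ : Equiv.Perm (Fin N)) ^ (Nat.factorial N) = 1 := by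
    have := pow_card_eq_one (G := Equiv.Perm (Fin N)) (x := σ⁻¹)
    rwa [Fintype.card_perm, Fintype.card_fin] at this
  have := walk_pos K hKnn σ⁻¹ hτ (Nat.factorial N) i
  rw [hone, hKB] at this
  simpa using this
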